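/- arXiv:2206.06450 — 2 statements merged into one kernel-verified Lean document; each statement's English description precedes it below -/
import Mathlib

section
/- For the circular normal prior with exponential detection and allocation φ(r) = max(0, H√T - r²/(2σ²)), the probability of detection equals 1 - (1 + H√T)e^{-H√T}. -/
open MeasureTheory

/-- For the circular normal prior with exponential detection and allocation
`φ(r) = max 0 (H√T - r²/(2σ²))`, the probability of detection, written in polar
coordinates, equals `1 - (1 + H√T) e^{-H√T}`. -/
theorem stmt17 (σ H T : ℝ) (hσ : 0 < σ) (hH : 0 < H) (hT : 0 < T) :
    (∫ θ in (0:ℝ)..(2 * Real.pi), ∫ r in Set.Ioi (0:ℝ),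
        (1 - Real.exp (-(max 0 (H * Real.sqrt T - r^2 / (2 * σ^2)))))
          * (1 / (2 * Real.pi * σ^2)) * Real.exp (-(r^2 / (2 * σ^2))) * r)
      = 1 - (1 + H * Real.sqrt T) * Real.exp (-(H * Real.sqrt T)) := by
  have hσ2 : (0:ℝ) < σ^2 := by positivity
  set a := H * Real.sqrt T with ha
  have ha0 : 0 < a := mul_pos hH (Real.sqrt_pos.mpr hT)
  set R := Real.sqrt (2 * σ^2 * a) with hRdef
  have hR0 : (0:ℝ) ≤ R := Real.sqrt_nonneg _
  have hRsq : R^2 = 2 * σ^2 * a := Real.sq_sqrt (by positivity)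
  set F : ℝ → ℝ := fun r =>
    (1 - Real.exp (-(max 0 (a - r^2 / (2 * σ^2)))))
      * (1 / (2 * Real.pi * σ^2)) * Real.exp (-(r^2 / (2 * σ^2))) * r with hF
  have hFcont : Continuous F := by
    apply Continuous.mul
    apply Continuous.mul
    apply Continuous.mul
    · exact continuous_const.sub (Real.continuous_exp.comp
        (continuous_const.max ((continuous_const.sub
          ((continuous_pow 2).div_const _)))).neg)
    · exact continuous_const
    · exact Real.continuous_exp.comp ((continuous_pow 2).div_const _).neg
    · exact continuous_id
  -- the tail vanishes
  have htail : ∀ r ∈ Set.Ioi R, F r = 0 := by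
    intro r hr
    have hr' : R < r := hr
    have hrsq : 2 * σ^2 * a ≤ r^2 := by
      rw [← hRsq]
      exact pow_le_pow_left₀ hR0 hr'.le 2
    have hmax : max 0 (a - r^2 / (2 * σ^2)) = 0 := by
      apply max_eq_left
      rw [sub_nonpos, le_div_iff₀ (by positivity)]
      linarith
    simp [hF, hmax]
  have h2 : ∫ r in Set.Ioi R, F r = 0 := by
    rw [setIntegral_congr_fun measurableSet_Ioi htail]
    simp
  have hInt2 : IntegrableOn F (Set.Ioi R) := by
    apply (integrableOn_zero).congr_fun (fun r hr => (htail r hr).symm) measurableSet_Ioi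
  have hInt1 : IntegrableOn F (Set.Ioc 0 R) := hFcont.integrableOn_Ioc
  -- on the core, F simplifies
  have key : ∀ r ∈ Set.Ioc (0:ℝ) R,
      F r = (1 / (2 * Real.pi * σ^2)) * (Real.exp (-(r^2 / (2 * σ^2))) * r)
        - (1 / (2 * Real.pi * σ^2)) * Real.exp (-a) * r := by
    intro r hr
    have hrsq : r^2 ≤ 2 * σ^2 * a := by
      rw [← hRsq]; exact pow_le_pow_left₀ hr.1.le hr.2 2
    have hmax : max 0 (a - r^2 / (2 * σ^2)) = a - r^2 / (2 * σ^2) := by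
      apply max_eq_right
      rw [sub_nonneg, div_le_iff₀ (by positivity)]
      linarith
    have hE : Real.exp (-(a - r^2 / (2 * σ^2))) * Real.exp (-(r^2 / (2 * σ^2)))
        = Real.exp (-a) := by
      rw [← Real.exp_add]; ring_nf
    simp only [hF, hmax]
    linear_combination (-(1 / (2 * Real.pi * σ^2)) * r) * hE
  -- antiderivative for the Gaussian part
  have hderiv : ∀ r : ℝ, HasDerivAt (fun r => -σ^2 * Real.exp (-(r^2 / (2 * σ^2))))
      (Real.exp (-(r^2 / (2 * σ^2))) * r) r := by
    intro r
    have h1 : HasDerivAt (fun r : ℝ => -(r^2 / (2 * σ^2))) (-(r / σ^2)) r := by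
      have := ((hasDerivAt_pow 2 r).div_const (2 * σ^2)).neg
      refine HasDerivAt.congr_deriv this ?_
      have hs : σ^2 ≠ 0 := hσ2.ne'
      norm_num
      field_simp
    have h2' := (h1.exp.const_mul (-σ^2))
    refine HasDerivAt.congr_deriv h2' ?_
    have hs : σ^2 ≠ 0 := hσ2.ne'
    field_simp
  have hG : ∫ r in (0:ℝ)..R, Real.exp (-(r^2 / (2 * σ^2))) * r
      = σ^2 * (1 - Real.exp (-a)) := by
    rw [intervalIntegral.integral_eq_sub_of_hasDerivAt (fun r _ => hderiv r)
      (((Real.continuous_exp.comp ((continuous_pow 2).div_const _).neg).mul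
        continuous_id).intervalIntegrable 0 R)]
    have : R^2 / (2 * σ^2) = a := by
      rw [hRsq]; field_simp
    rw [this]
    simp
    ring
  have hinner : ∫ r in Set.Ioi (0:ℝ), F r
      = (1 / (2 * Real.pi)) * (1 - (1 + a) * Real.exp (-a)) := by
    rw [show Set.Ioi (0:ℝ) = Set.Ioc 0 R ∪ Set.Ioi R from
      (Set.Ioc_union_Ioi_eq_Ioi hR0).symm,
      setIntegral_union (Set.Ioc_disjoint_Ioi le_rfl) measurableSet_Ioi hInt1 hInt2,
      h2, add_zero, setIntegral_congr_fun measurableSet_Ioc key,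
      ← intervalIntegral.integral_of_le hR0]
    rw [intervalIntegral.integral_sub]
    · rw [intervalIntegral.integral_const_mul, hG]
      rw [show (fun r : ℝ => (1 / (2 * Real.pi * σ^2)) * Real.exp (-a) * r)
          = fun r : ℝ => ((1 / (2 * Real.pi * σ^2)) * Real.exp (-a)) * r from rfl]
      rw [intervalIntegral.integral_const_mul, integral_id, hRsq]
      have hπ : Real.pi ≠ 0 := Real.pi_ne_zero
      field_simp
      ring
    · exact (Continuous.intervalIntegrable (by
        exact continuous_const.mul ((Real.continuous_exp.comp
          ((continuous_pow 2).div_const _).neg).mul continuous_id)) 0 R)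
    · exact (Continuous.intervalIntegrable (by
        exact (continuous_const.mul continuous_const).mul continuous_id) 0 R)
  simp only [hF] at hinner
  rw [intervalIntegral.integral_congr (g := fun _ : ℝ =>
      (1 / (2 * Real.pi)) * (1 - (1 + a) * Real.exp (-a))) (fun θ _ => hinner)]
  rw [intervalIntegral.integral_const]
  simp only [smul_eq_mul, sub_zero]
  have hπ : Real.pi ≠ 0 := Real.pi_ne_zero
  field_simp
end

section
/- For the detection function d(x,y) = 1 - e^{-x²y} (regular but non-homogeneous) with prior π, the unnormalized posterior on the searched region D_λ = {x : λ ≤ x²π(x)} equals λ/x², which is not constant in x; hence the constant-posterior property fails for general regular detection functions. -/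
/-- For the regular (but non-homogeneous) detection function `d(x,y) = 1 - e^{-x² y}`
with prior `π`, the unnormalized posterior on the searched region
`D_λ = {x : λ ≤ x² π x}` equals `λ/x²`, which is not constant in `x`: it differs at
two points of the region with distinct absolute values. -/
theorem stmt19 (π : ℝ → ℝ) (lam : ℝ) (hlam : 0 < lam) :
    (∀ x : ℝ, x ≠ 0 → lam ≤ x^2 * π x →
        Real.exp (-(x^2) * (-(1 / x^2) * Real.log (lam / (x^2 * π x)))) * π x
          = lam / x^2) ∧
    ∀ x y : ℝ, x ≠ 0 → y ≠ 0 → lam ≤ x^2 * π x → lam ≤ y^2 * π y →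
      |x| ≠ |y| → lam / x^2 ≠ lam / y^2 := by
  constructor
  · intro x hx hle
    have hx2 : (0:ℝ) < x^2 := by positivity
    have hpos : 0 < x^2 * π x := lt_of_lt_of_le hlam hle
    have hπ : 0 < π x := by
      by_contra h
      push_neg at h
      nlinarith
    have hexp : -(x^2) * (-(1 / x^2) * Real.log (lam / (x^2 * π x)))
        = Real.log (lam / (x^2 * π x)) := by
      field_simp
    rw [hexp, Real.exp_log (by positivity)]
    field_simp
  · intro x y hx hy _ _ hne heq
    apply hne
    have hx2 : (0:ℝ) < x^2 := by positivity
    have hy2 : (0:ℝ) < y^2 := by positivity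
    have : x^2 = y^2 := by
      field_simp at heq
      linarith
    have h2 : |x|^2 = |y|^2 := by rw [sq_abs, sq_abs]; exact this
    nlinarith [abs_nonneg x, abs_nonneg y, sq_nonneg (|x| - |y|), sq_nonneg (|x| + |y|)]
end
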